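/- If A, B, C are positive integers with A!·B! = C! and C ≥ 2, then C ≥ A + B + 1 - log(A+1)/log 2 - log(B+1)/log 2. -/

import Mathlib

lemma two_pow_digit_sum_le (n : ℕ) : 2 ^ (Nat.digits 2 n).sum ≤ n + 1 := by
  induction n using Nat.strong_induction_on with
  | _ n ih =>
    rcases Nat.eq_zero_or_pos n with rfl | hn
    · simp
    · rw [Nat.digits_def' (by norm_num : 1 < 2) hn]
      simp only [List.sum_cons]
      have hdiv : n / 2 < n := Nat.div_lt_self hn (by norm_num)
      have h1 := ih (n / 2) hdiv
      have hmod : n % 2 < 2 := Nat.mod_lt _ (by norm_num)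
      have key : 2 ^ (n % 2) * (n / 2 + 1) ≤ n + 1 := by
        interval_cases h : n % 2 <;> omega
      calc 2 ^ (n % 2 + (Nat.digits 2 (n / 2)).sum)
          = 2 ^ (n % 2) * 2 ^ (Nat.digits 2 (n / 2)).sum := pow_add 2 _ _
        _ ≤ 2 ^ (n % 2) * (n / 2 + 1) := Nat.mul_le_mul_left _ h1
        _ ≤ n + 1 := key

lemma digit_sum_pos {n : ℕ} (hn : 0 < n) : 0 < (Nat.digits 2 n).sum := by
  induction n using Nat.strong_induction_on with
  | _ n ih =>
    rw [Nat.digits_def' (by norm_num : 1 < 2) hn]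
    simp only [List.sum_cons]
    rcases Nat.eq_zero_or_pos (n % 2) with h | h
    · have h2 : 0 < n / 2 := by omega
      have := ih (n / 2) (Nat.div_lt_self hn (by norm_num)) h2
      omega
    · omega

lemma digit_sum_le_self (n : ℕ) : (Nat.digits 2 n).sum ≤ n := by
  have h1 := two_pow_digit_sum_le n
  have h2 : (Nat.digits 2 n).sum < 2 ^ (Nat.digits 2 n).sum := Nat.lt_two_pow_self
  omega

lemma digit_sum_le_log (n : ℕ) :
    ((Nat.digits 2 n).sum : ℝ) ≤ Real.log (n + 1) / Real.log 2 := by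
  have h2 : (0 : ℝ) < Real.log 2 := Real.log_pos (by norm_num)
  rw [le_div_iff₀ h2]
  have : ((2 : ℝ)) ^ (Nat.digits 2 n).sum ≤ (n : ℝ) + 1 := by
    exact_mod_cast two_pow_digit_sum_le n
  calc ((Nat.digits 2 n).sum : ℝ) * Real.log 2
      = Real.log (2 ^ (Nat.digits 2 n).sum) := by rw [Real.log_pow]
    _ ≤ Real.log ((n : ℝ) + 1) := Real.log_le_log (by positivity) this

theorem lower_bound_C (A B C : ℕ) (hA : 0 < A) (hB : 0 < B) (hC : 2 ≤ C)
    (h : Nat.factorial A * Nat.factorial B = Nat.factorial C) :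
    (C : ℝ) ≥ (A : ℝ) + B + 1 - Real.log (A + 1) / Real.log 2
      - Real.log (B + 1) / Real.log 2 := by
  haveI : Fact (Nat.Prime 2) := ⟨Nat.prime_two⟩
  have leg : ∀ n : ℕ, padicValNat 2 (Nat.factorial n) = n - (Nat.digits 2 n).sum := by
    intro n
    have := sub_one_mul_padicValNat_factorial (p := 2) n
    simpa using this
  have hmul : padicValNat 2 (Nat.factorial A) + padicValNat 2 (Nat.factorial B)
      = padicValNat 2 (Nat.factorial C) := by
    rw [← padicValNat.mul (Nat.factorial_ne_zero A) (Nat.factorial_ne_zero B), h]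
  rw [leg A, leg B, leg C] at hmul
  have hsA := digit_sum_le_self A
  have hsB := digit_sum_le_self B
  have hsC := digit_sum_le_self C
  have hC1 : 1 ≤ (Nat.digits 2 C).sum := digit_sum_pos (by omega)
  -- C = A + B + sC - sA - sB  ≥  A + B + 1 - sA - sB
  have key : (A : ℝ) + B + 1 - (Nat.digits 2 A).sum - (Nat.digits 2 B).sum ≤ C := by
    have : A + B + 1 ≤ C + (Nat.digits 2 A).sum + (Nat.digits 2 B).sum := by omega
    have := (Nat.cast_le (α := ℝ)).mpr this
    push_cast at this ⊢
    linarith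
  have hA' := digit_sum_le_log A
  have hB' := digit_sum_le_log B
  linarith
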